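/- Fix an odd integer d_v ≥ 5 and an integer d_c > d_v, and set m = (d_v − 1)/2. There exist δ ∈ (0, 1/2] and constants 0 < c₁ ≤ c₂, all depending only on d_v and d_c, such that for every p₀ ∈ (0, δ], the sequence defined by q_0 = p₀ and q_{i+1} = f_B(q_i) (where f_B is the Gallager-B density-evolution map with parameters (p₀, d_v, d_c)) satisfies, for every i ≥ 0: c₁^{(m^i − 1)/(m − 1)} · p₀^{m^i} ≤ q_i ≤ c₂^{(m^i − 1)/(m − 1)} · p₀^{m^i}. -/

import Mathlib

open Finset

/-- The Gallager-B density-evolution map with channel flip probability `p₀` and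
degrees `(d_v, d_c)`, for odd `d_v`. -/
noncomputable def gallagerB (p₀ : ℝ) (d_v d_c : ℕ) (p : ℝ) : ℝ :=
  p₀ - (p₀ / 2 ^ (d_v - 1)) *
        ∑ j ∈ Finset.Icc ((d_v - 1) / 2) (d_v - 1),
          (Nat.choose (d_v - 1) j : ℝ) * (1 + (1 - 2 * p) ^ (d_c - 1)) ^ j *
            (1 - (1 - 2 * p) ^ (d_c - 1)) ^ (d_v - 1 - j)
     + ((1 - p₀) / 2 ^ (d_v - 1)) *
        ∑ j ∈ Finset.Icc ((d_v - 1) / 2) (d_v - 1),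
          (Nat.choose (d_v - 1) j : ℝ) * (1 - (1 - 2 * p) ^ (d_c - 1)) ^ j *
            (1 + (1 - 2 * p) ^ (d_c - 1)) ^ (d_v - 1 - j)


private lemma geom_div (m : ℕ) (hm : 2 ≤ m) (i : ℕ) :
    (m ^ (i+1) - 1) / (m - 1) = m * ((m ^ i - 1) / (m - 1)) + 1 := by
  obtain ⟨u, rfl⟩ : ∃ u, m = u + 2 := ⟨m - 2, by omega⟩
  obtain ⟨t, ht⟩ : (u+1) ∣ ((u+2)^i - 1) := by
    simpa using Nat.sub_dvd_pow_sub_pow (u+2) 1 i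
  have hp : 1 ≤ (u+2)^i := Nat.one_le_pow _ _ (by omega)
  have hpi : (u+2)^i = (u+1)*t + 1 := by omega
  have key : ((u+1)*t+1)*(u+2) = (u+1)*((u+2)*t+1) + 1 := by ring
  have h2 : (u+2)^(i+1) - 1 = (u+1) * ((u+2)*t+1) := by
    rw [pow_succ, hpi]; omega
  have h3 : (u+2)^i - 1 = (u+1) * t := ht
  have hu1 : 0 < u + 1 := by omega
  rw [show u + 2 - 1 = u + 1 by omega, h2, h3, Nat.mul_div_cancel_left _ hu1,
    Nat.mul_div_cancel_left _ hu1]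

private lemma sum_binom (N : ℕ) (x : ℝ) :
    ∑ j ∈ range (N+1), (N.choose j : ℝ) * (1+x)^j * (1-x)^(N-j) = 2^N := by
  calc ∑ j ∈ range (N+1), (N.choose j : ℝ) * (1+x)^j * (1-x)^(N-j)
      = ∑ j ∈ range (N+1), (1+x)^j * (1-x)^(N-j) * (N.choose j) := by
        apply Finset.sum_congr rfl; intros; ring
    _ = ((1+x)+(1-x))^N := (add_pow _ _ _).symm
    _ = 2^N := by norm_num

private lemma split_sum (m : ℕ) (f : ℕ → ℝ) :
    ∑ j ∈ range (2*m+1), f j = ∑ j ∈ range m, f j + ∑ j ∈ Icc m (2*m), f j := by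
  rw [range_eq_Ico, range_eq_Ico, ← Finset.Ico_add_one_right_eq_Icc]
  exact (Finset.sum_Ico_consecutive f (Nat.zero_le m) (by omega : m ≤ 2*m+1)).symm

private lemma choose_le_two_pow' (N k : ℕ) : ((N.choose k : ℕ) : ℝ) ≤ 2^N := by
  have : N.choose k ≤ 2^N := by
    rcases le_or_gt k N with h | h
    · calc N.choose k ≤ ∑ j ∈ range (N+1), N.choose j :=
            Finset.single_le_sum (fun _ _ => Nat.zero_le _) (by simp [Finset.mem_range]; omega)
        _ = 2^N := Nat.sum_range_choose N
    · simp [Nat.choose_eq_zero_of_lt h]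
  exact_mod_cast this

private lemma combo_lower (m : ℕ) (a x : ℝ) (ha0 : 0 ≤ a) (ha1 : a ≤ 1/2)
    (hx0 : 0 ≤ x) (hx1 : x ≤ 1) :
    ((2*m).choose m : ℝ) / 2^(2*m+1) * (1-x)^m ≤
      a - (a / 2 ^ (2*m)) *
        ∑ j ∈ Finset.Icc m (2*m), ((2*m).choose j : ℝ) * (1 + x) ^ j * (1 - x) ^ (2*m - j)
      + ((1 - a) / 2 ^ (2*m)) *
        ∑ j ∈ Finset.Icc m (2*m), ((2*m).choose j : ℝ) * (1 - x) ^ j * (1 + x) ^ (2*m - j) := by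
  have h1x0 : (0:ℝ) ≤ 1 - x := by linarith
  have h1x1 : (0:ℝ) ≤ 1 + x := by linarith
  set Sp := ∑ j ∈ Finset.Icc m (2*m), ((2*m).choose j : ℝ) * (1 + x) ^ j * (1 - x) ^ (2*m - j)
    with hSp
  set Sm := ∑ j ∈ Finset.Icc m (2*m), ((2*m).choose j : ℝ) * (1 - x) ^ j * (1 + x) ^ (2*m - j)
    with hSm
  have hSple : Sp ≤ 2^(2*m) := by
    rw [hSp, ← sum_binom (2*m) x]
    apply Finset.sum_le_sum_of_subset_of_nonneg
    · intro j hj; simp only [Finset.mem_Icc, Finset.mem_range] at *; omega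
    · intro j _ _
      exact mul_nonneg (mul_nonneg (Nat.cast_nonneg _) (pow_nonneg h1x1 _)) (pow_nonneg h1x0 _)
  have hSmge : ((2*m).choose m : ℝ) * (1-x)^m ≤ Sm := by
    have hmem : m ∈ Finset.Icc m (2*m) := by simp [Finset.mem_Icc]; omega
    have hs := Finset.single_le_sum
      (f := fun j => ((2*m).choose j : ℝ) * (1 - x) ^ j * (1 + x) ^ (2*m - j))
      (fun j _ => mul_nonneg (mul_nonneg (Nat.cast_nonneg _) (pow_nonneg h1x0 _))
        (pow_nonneg h1x1 _)) hmem
    refine le_trans ?_ hs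
    have h1 : (1:ℝ) ≤ (1+x)^(2*m-m) := by
      calc (1:ℝ) = 1^(2*m-m) := (one_pow _).symm
        _ ≤ (1+x)^(2*m-m) := pow_le_pow_left₀ (by norm_num) (by linarith) _
    exact le_mul_of_one_le_right (mul_nonneg (Nat.cast_nonneg _) (pow_nonneg h1x0 _)) h1
  have hterm1 : 0 ≤ a - a/2^(2*m) * Sp := by
    have h1 : a/2^(2*m) * Sp ≤ a/2^(2*m) * 2^(2*m) :=
      mul_le_mul_of_nonneg_left hSple (by positivity)
    have h2 : a/2^(2*m) * 2^(2*m) = a := by field_simp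
    linarith
  have hterm2 : ((2*m).choose m : ℝ)/2^(2*m+1) * (1-x)^m ≤ (1-a)/2^(2*m) * Sm := by
    have hha : (1/2 : ℝ) ≤ 1 - a := by linarith
    calc ((2*m).choose m : ℝ)/2^(2*m+1) * (1-x)^m
        = (1/2)/2^(2*m) * (((2*m).choose m : ℝ) * (1-x)^m) := by rw [pow_succ]; ring
      _ ≤ (1-a)/2^(2*m) * Sm := by
          apply mul_le_mul _ hSmge
            (mul_nonneg (Nat.cast_nonneg _) (pow_nonneg h1x0 _)) (by positivity)
          gcongr <;> norm_num
  linarith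

private lemma combo_upper (m : ℕ) (a x : ℝ) (ha0 : 0 ≤ a) (ha1 : a ≤ 1/2)
    (hx0 : 0 ≤ x) (hx1 : x ≤ 1) :
    a - (a / 2 ^ (2*m)) *
        ∑ j ∈ Finset.Icc m (2*m), ((2*m).choose j : ℝ) * (1 + x) ^ j * (1 - x) ^ (2*m - j)
      + ((1 - a) / 2 ^ (2*m)) *
        ∑ j ∈ Finset.Icc m (2*m), ((2*m).choose j : ℝ) * (1 - x) ^ j * (1 + x) ^ (2*m - j)
      ≤ ((2*m+1 : ℕ) : ℝ) * 2^(2*m) * (1-x)^m := by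
  have h1x0 : (0:ℝ) ≤ 1 - x := by linarith
  have h1x1 : (0:ℝ) ≤ 1 + x := by linarith
  set Sp := ∑ j ∈ Finset.Icc m (2*m), ((2*m).choose j : ℝ) * (1 + x) ^ j * (1 - x) ^ (2*m - j)
    with hSp
  set Sm := ∑ j ∈ Finset.Icc m (2*m), ((2*m).choose j : ℝ) * (1 - x) ^ j * (1 + x) ^ (2*m - j)
    with hSm
  set Y := (1-x)^m with hY
  have hY0 : 0 ≤ Y := pow_nonneg h1x0 _
  have hgapEq : (2:ℝ)^(2*m) - Sp
      = ∑ j ∈ range m, ((2*m).choose j : ℝ) * (1 + x) ^ j * (1 - x) ^ (2*m - j) := by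
    rw [← sum_binom (2*m) x,
      split_sum m (fun j => ((2*m).choose j : ℝ) * (1 + x) ^ j * (1 - x) ^ (2*m - j))]
    ring
  have hgap0 : 0 ≤ (2:ℝ)^(2*m) - Sp := by
    rw [hgapEq]
    exact Finset.sum_nonneg fun j _ =>
      mul_nonneg (mul_nonneg (Nat.cast_nonneg _) (pow_nonneg h1x1 _)) (pow_nonneg h1x0 _)
  have hgaple : (2:ℝ)^(2*m) - Sp ≤ (m:ℝ) * (2^(2*m) * 2^(2*m) * Y) := by
    rw [hgapEq]
    calc ∑ j ∈ range m, ((2*m).choose j : ℝ) * (1 + x) ^ j * (1 - x) ^ (2*m - j)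
        ≤ ∑ _j ∈ range m, ((2:ℝ)^(2*m) * 2^(2*m) * Y) := by
          apply Finset.sum_le_sum
          intro j hj
          simp only [Finset.mem_range] at hj
          have hC : ((2*m).choose j : ℝ) ≤ 2^(2*m) := choose_le_two_pow' _ _
          have hA : (1+x)^j ≤ (2:ℝ)^(2*m) := by
            calc (1+x)^j ≤ (2:ℝ)^j := pow_le_pow_left₀ h1x1 (by linarith) _
              _ ≤ (2:ℝ)^(2*m) := pow_le_pow_right₀ one_le_two (by omega)
          have hB : (1-x)^(2*m-j) ≤ Y := pow_le_pow_of_le_one h1x0 (by linarith) (by omega)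
          exact mul_le_mul (mul_le_mul hC hA (pow_nonneg h1x1 _) (by positivity)) hB
            (pow_nonneg h1x0 _) (by positivity)
      _ = (m:ℝ) * (2^(2*m) * 2^(2*m) * Y) := by
          rw [Finset.sum_const, card_range, nsmul_eq_mul]
  have hSm0 : 0 ≤ Sm := Finset.sum_nonneg fun j _ =>
    mul_nonneg (mul_nonneg (Nat.cast_nonneg _) (pow_nonneg h1x0 _)) (pow_nonneg h1x1 _)
  have hSmle : Sm ≤ ((m:ℝ)+1) * (2^(2*m) * 2^(2*m) * Y) := by
    calc Sm ≤ ∑ _j ∈ Finset.Icc m (2*m), ((2:ℝ)^(2*m) * Y * 2^(2*m)) := by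
          apply Finset.sum_le_sum
          intro j hj
          simp only [Finset.mem_Icc] at hj
          have hC : ((2*m).choose j : ℝ) ≤ 2^(2*m) := choose_le_two_pow' _ _
          have hB : (1-x)^j ≤ Y := pow_le_pow_of_le_one h1x0 (by linarith) hj.1
          have hA : (1+x)^(2*m-j) ≤ (2:ℝ)^(2*m) := by
            calc (1+x)^(2*m-j) ≤ (2:ℝ)^(2*m-j) := pow_le_pow_left₀ h1x1 (by linarith) _
              _ ≤ (2:ℝ)^(2*m) := pow_le_pow_right₀ one_le_two (by omega)
          exact mul_le_mul (mul_le_mul hC hB (pow_nonneg h1x0 _) (by positivity)) hA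
            (pow_nonneg h1x1 _) (by positivity)
      _ = ((m:ℝ)+1) * (2^(2*m) * 2^(2*m) * Y) := by
          rw [Finset.sum_const, Nat.card_Icc, nsmul_eq_mul]
          have : 2*m+1-m = m+1 := by omega
          rw [this]; push_cast; ring
  have hrw : a - a/2^(2*m) * Sp + (1-a)/2^(2*m) * Sm
      = a/2^(2*m) * ((2:ℝ)^(2*m) - Sp) + (1-a)/2^(2*m) * Sm := by
    field_simp
  rw [hrw]
  have e1 : a/2^(2*m) * ((2:ℝ)^(2*m) - Sp) ≤ 1/2^(2*m) * ((m:ℝ) * (2^(2*m) * 2^(2*m) * Y)) := by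
    apply mul_le_mul _ hgaple hgap0 (by positivity)
    gcongr <;> linarith
  have e2 : (1-a)/2^(2*m) * Sm ≤ 1/2^(2*m) * (((m:ℝ)+1) * (2^(2*m) * 2^(2*m) * Y)) := by
    apply mul_le_mul _ hSmle hSm0 (by positivity)
    gcongr <;> linarith
  have efin : 1/2^(2*m) * ((m:ℝ) * (2^(2*m) * 2^(2*m) * Y))
      + 1/2^(2*m) * (((m:ℝ)+1) * (2^(2*m) * 2^(2*m) * Y))
      = ((2*m+1 : ℕ) : ℝ) * 2^(2*m) * Y := by
    push_cast
    field_simp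
    ring
  linarith

/-- Doubly-exponential two-sided decay of the Gallager-B density-evolution sequence
(Lemma 4). -/
theorem gallagerB_doubly_exponential_decay (d_v d_c : ℕ) (hodd : Odd d_v) (hdv : 5 ≤ d_v)
    (hlt : d_v < d_c) (m : ℕ) (hm : m = (d_v - 1) / 2) :
    ∃ δ ∈ Set.Ioc (0 : ℝ) (1 / 2), ∃ c₁ c₂ : ℝ, 0 < c₁ ∧ c₁ ≤ c₂ ∧
      ∀ p₀ ∈ Set.Ioc (0 : ℝ) δ, ∀ q : ℕ → ℝ, q 0 = p₀ →
        (∀ i : ℕ, q (i + 1) = gallagerB p₀ d_v d_c (q i)) →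
        ∀ i : ℕ,
          c₁ ^ ((m ^ i - 1) / (m - 1)) * p₀ ^ (m ^ i) ≤ q i ∧
          q i ≤ c₂ ^ ((m ^ i - 1) / (m - 1)) * p₀ ^ (m ^ i) := by
  obtain ⟨k, hk⟩ := hodd
  have hm2 : 2 ≤ m := by omega
  have hmid : (d_v - 1) / 2 = m := by omega
  have hn : d_v - 1 = 2 * m := by omega
  have hdc2 : 1 ≤ d_c - 1 := by omega
  -- constants
  set C : ℝ := ((2*m).choose m : ℝ) with hC
  have hCpos : (0:ℝ) < C := by
    rw [hC]; exact_mod_cast Nat.choose_pos (by omega : m ≤ 2*m)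
  set c₁ : ℝ := C * 2^m / 2^(2*m+1) with hc₁
  set c₂ : ℝ := ((2*m+1 : ℕ) : ℝ) * 2^(2*m) * (2*((d_c - 1 : ℕ):ℝ))^m with hc₂
  have hdcR : (1:ℝ) ≤ ((d_c - 1 : ℕ):ℝ) := by exact_mod_cast hdc2
  have hc₁pos : 0 < c₁ := by rw [hc₁]; positivity
  have hc₂pos : 0 < c₂ := by
    rw [hc₂]; positivity
  have hc₁₂ : c₁ ≤ c₂ := by
    have h1 : C ≤ 2^(2*m) := choose_le_two_pow' (2*m) m
    have h2 : (2:ℝ)^m ≤ 2^(2*m+1) := pow_le_pow_right₀ one_le_two (by omega)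
    have h3 : (1:ℝ) ≤ (2*((d_c - 1 : ℕ):ℝ))^m := by
      calc (1:ℝ) = 1^m := (one_pow m).symm
        _ ≤ (2*((d_c - 1 : ℕ):ℝ))^m := pow_le_pow_left₀ (by norm_num) (by linarith) m
    have hA : (1:ℝ) ≤ ((2*m+1 : ℕ):ℝ) := by
      exact_mod_cast Nat.one_le_iff_ne_zero.mpr (by omega)
    have step1 : c₁ ≤ 2^(2*m) := by
      rw [hc₁, div_le_iff₀ (by positivity)]
      exact mul_le_mul h1 h2 (by positivity) (by positivity)
    have step2 : (2:ℝ)^(2*m) ≤ c₂ := by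
      rw [hc₂]
      have h5 : (1:ℝ) * 2^(2*m) * 1
          ≤ ((2*m+1 : ℕ):ℝ) * 2^(2*m) * (2*((d_c - 1 : ℕ):ℝ))^m :=
        mul_le_mul (mul_le_mul hA le_rfl (by positivity) (by positivity)) h3
          (by norm_num) (by positivity)
      linarith
    linarith
  set δ : ℝ := min (1/2) (1/c₂) with hδ
  have hδpos : 0 < δ := by rw [hδ]; positivity
  have hδhalf : δ ≤ 1/2 := min_le_left _ _
  refine ⟨δ, ⟨hδpos, hδhalf⟩, c₁, c₂, hc₁pos, hc₁₂, ?_⟩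
  rintro p₀ ⟨hp₀0, hp₀δ⟩ q hq0 hrec
  have hp₀half : p₀ ≤ 1/2 := le_trans hp₀δ hδhalf
  -- the one-step estimate
  have key : ∀ p : ℝ, 0 ≤ p → p ≤ 1/2 →
      c₁ * p^m ≤ gallagerB p₀ d_v d_c p ∧ gallagerB p₀ d_v d_c p ≤ c₂ * p^m := by
    intro p hp0 hp1
    have h2p : (0:ℝ) ≤ 1 - 2*p := by linarith
    have hx0 : (0:ℝ) ≤ (1-2*p)^(d_c-1) := pow_nonneg h2p _
    have hx1 : (1-2*p)^(d_c-1) ≤ 1 := pow_le_one₀ h2p (by linarith)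
    have hEq : gallagerB p₀ d_v d_c p =
        p₀ - (p₀ / 2 ^ (2*m)) *
          ∑ j ∈ Finset.Icc m (2*m), ((2*m).choose j : ℝ) * (1 + (1-2*p)^(d_c-1)) ^ j *
            (1 - (1-2*p)^(d_c-1)) ^ (2*m - j)
        + ((1 - p₀) / 2 ^ (2*m)) *
          ∑ j ∈ Finset.Icc m (2*m), ((2*m).choose j : ℝ) * (1 - (1-2*p)^(d_c-1)) ^ j *
            (1 + (1-2*p)^(d_c-1)) ^ (2*m - j) := by
      simp only [gallagerB]
      rw [hmid, hn]
    have hL := combo_lower m p₀ ((1-2*p)^(d_c-1)) hp₀0.le hp₀half hx0 hx1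
    have hU := combo_upper m p₀ ((1-2*p)^(d_c-1)) hp₀0.le hp₀half hx0 hx1
    have hxle : (1-2*p)^(d_c-1) ≤ 1 - 2*p := by
      calc (1-2*p)^(d_c-1) ≤ (1-2*p)^1 := pow_le_pow_of_le_one h2p (by linarith) hdc2
        _ = 1-2*p := pow_one _
    have hxge : 1 - 2*((d_c - 1 : ℕ):ℝ)*p ≤ (1-2*p)^(d_c-1) := by
      have hb := one_add_mul_le_pow (a := -(2*p)) (by linarith) (d_c-1)
      calc 1 - 2*((d_c - 1 : ℕ):ℝ)*p = 1 + ((d_c - 1 : ℕ):ℝ)*(-(2*p)) := by ring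
        _ ≤ (1 + -(2*p))^(d_c-1) := hb
        _ = (1-2*p)^(d_c-1) := by rw [show (1 + -(2*p) : ℝ) = 1 - 2*p by ring]
    constructor
    · rw [hEq]
      refine le_trans ?_ hL
      have hpow : (2*p)^m ≤ (1 - (1-2*p)^(d_c-1))^m :=
        pow_le_pow_left₀ (by linarith) (by linarith) m
      calc c₁ * p^m = C/2^(2*m+1) * (2*p)^m := by rw [hc₁, mul_pow]; ring
        _ ≤ C/2^(2*m+1) * (1 - (1-2*p)^(d_c-1))^m :=
            mul_le_mul_of_nonneg_left hpow (by positivity)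
    · rw [hEq]
      refine le_trans hU ?_
      have hY : (1 - (1-2*p)^(d_c-1))^m ≤ (2*((d_c - 1 : ℕ):ℝ)*p)^m :=
        pow_le_pow_left₀ (by linarith) (by linarith) m
      calc ((2*m+1 : ℕ) : ℝ) * 2^(2*m) * (1 - (1-2*p)^(d_c-1))^m
          ≤ ((2*m+1 : ℕ) : ℝ) * 2^(2*m) * (2*((d_c - 1 : ℕ):ℝ)*p)^m :=
            mul_le_mul_of_nonneg_left hY (by positivity)
        _ = c₂ * p^m := by rw [hc₂, mul_pow]; ring
  -- main induction
  have main : ∀ i : ℕ,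
      (c₁ ^ ((m ^ i - 1) / (m - 1)) * p₀ ^ (m ^ i) ≤ q i ∧
        q i ≤ c₂ ^ ((m ^ i - 1) / (m - 1)) * p₀ ^ (m ^ i)) ∧ q i ≤ δ := by
    intro i
    induction i with
    | zero =>
      refine ⟨⟨?_, ?_⟩, ?_⟩ <;> simp [hq0]
      exact hp₀δ
    | succ i ih =>
      obtain ⟨⟨hlb, hub⟩, hqδ⟩ := ih
      have hqpos : 0 < q i := lt_of_lt_of_le (by positivity) hlb
      have hqhalf : q i ≤ 1/2 := le_trans hqδ hδhalf
      have hk2 := key (q i) hqpos.le hqhalf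
      have hs : (m ^ (i+1) - 1) / (m - 1) = m * ((m ^ i - 1)/(m-1)) + 1 := geom_div m hm2 i
      have hmp : m ^ (i+1) = m ^ i * m := pow_succ m i
      refine ⟨⟨?_, ?_⟩, ?_⟩
      · rw [hrec i]
        calc c₁ ^ ((m^(i+1)-1)/(m-1)) * p₀^(m^(i+1))
            = c₁ * (c₁ ^ ((m^i-1)/(m-1)) * p₀^(m^i))^m := by
              rw [hs, hmp, mul_comm m ((m^i-1)/(m-1)), pow_succ, pow_mul, pow_mul, mul_pow]
              ring
          _ ≤ c₁ * (q i)^m :=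
              mul_le_mul_of_nonneg_left (pow_le_pow_left₀ (by positivity) hlb m) hc₁pos.le
          _ ≤ gallagerB p₀ d_v d_c (q i) := hk2.1
      · rw [hrec i]
        calc gallagerB p₀ d_v d_c (q i) ≤ c₂ * (q i)^m := hk2.2
          _ ≤ c₂ * (c₂ ^ ((m^i-1)/(m-1)) * p₀^(m^i))^m :=
              mul_le_mul_of_nonneg_left (pow_le_pow_left₀ hqpos.le hub m) hc₂pos.le
          _ = c₂ ^ ((m^(i+1)-1)/(m-1)) * p₀^(m^(i+1)) := by
              rw [hs, hmp, mul_comm m ((m^i-1)/(m-1)), pow_succ, pow_mul, pow_mul, mul_pow]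
              ring
      · rw [hrec i]
        have hδ1 : δ ≤ 1 := le_trans hδhalf (by norm_num)
        have hδ0 : (0:ℝ) ≤ δ := hδpos.le
        have h2 : (q i)^m ≤ δ^(m-1) * q i := by
          have e : (q i)^m = (q i)^(m-1) * q i := by
            rw [← pow_succ]; congr 1; omega
          rw [e]
          exact mul_le_mul_of_nonneg_right (pow_le_pow_left₀ hqpos.le hqδ _) hqpos.le
        have h3 : δ^(m-1) ≤ δ := by
          calc δ^(m-1) ≤ δ^1 := pow_le_pow_of_le_one hδ0 hδ1 (by omega)
            _ = δ := pow_one _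
        have h4 : c₂ * δ ≤ 1 := by
          calc c₂ * δ ≤ c₂ * (1/c₂) := mul_le_mul_of_nonneg_left (min_le_right _ _) hc₂pos.le
            _ = 1 := by field_simp
        calc gallagerB p₀ d_v d_c (q i) ≤ c₂ * (q i)^m := hk2.2
          _ ≤ c₂ * (δ^(m-1) * q i) := mul_le_mul_of_nonneg_left h2 hc₂pos.le
          _ ≤ 1 * q i := by
              rw [← mul_assoc]
              apply mul_le_mul_of_nonneg_right _ hqpos.le
              calc c₂ * δ^(m-1) ≤ c₂ * δ := mul_le_mul_of_nonneg_left h3 hc₂pos.le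
                _ ≤ 1 := h4
          _ = q i := one_mul _
          _ ≤ δ := hqδ
  intro i
  exact (main i).1
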